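/- Let n ≥ 1 and let k₁,…,k_{2n} be integers satisfying |k_j − k_{j+1}| ≥ 1 for every j = 1,…,2n−1. Then the integral I'ₙ = ∫_{−π}^{π} [sin((k₁+k_{2n})η/2)/sin(η/2)] · ∏_{j=1}^{2n−1} [sin((k_j−k_{j+1})η/2) / ((k_j−k_{j+1}) sin(η/2))] dη satisfies |I'ₙ| ≤ 2π. (The integrand, defined for η ∈ (−π,π)∖{0}, is bounded — each quotient sin(mη/2)/sin(η/2) is bounded by |m| — so the integral is an ordinary Lebesgue integral.) -/

import Mathlib

open Real intervalIntegral

section InAux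
open Complex Finset

private lemma geom_aux' (w : ℂ) (hw : w ≠ 0) (m : ℕ) :
    (w ^ m)⁻¹ - w ^ m
      = (w⁻¹ - w) * ((w ^ m)⁻¹ * w * ∑ r ∈ Finset.range m, (w ^ 2) ^ r) := by
  rcases eq_or_ne (w ^ 2) 1 with h1 | h1
  · have hw2 : w * w = 1 := by rwa [pow_two] at h1
    have h3 : w⁻¹ = w := inv_eq_of_mul_eq_one_left hw2
    have h4 : (w ^ m)⁻¹ = w ^ m := inv_eq_of_mul_eq_one_left (by rw [← mul_pow, hw2, one_pow])
    rw [h3, h4]; ring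
  · rw [geom_sum_eq h1 m]
    have h2 : w ^ 2 - 1 ≠ 0 := sub_ne_zero.mpr h1
    have hm : w ^ m ≠ 0 := pow_ne_zero _ hw
    field_simp
    ring

private lemma sin_mul_expand' (m : ℕ) (θ : ℝ) :
    (Real.sin (m * θ) : ℂ)
      = (Real.sin θ : ℂ) *
          ∑ r ∈ Finset.range m, Complex.exp (((2 * r + 1 - m : ℤ) : ℂ) * (θ * Complex.I)) := by
  set w := Complex.exp (θ * Complex.I) with hwdef
  have hw : w ≠ 0 := Complex.exp_ne_zero _
  have hsin : (Real.sin θ : ℂ) = (w⁻¹ - w) * Complex.I / 2 := by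
    rw [Complex.ofReal_sin, Complex.sin, hwdef, ← Complex.exp_neg]
    ring_nf
  have hsinm : (Real.sin (m * θ) : ℂ) = ((w ^ m)⁻¹ - w ^ m) * Complex.I / 2 := by
    rw [Complex.ofReal_sin, Complex.sin]
    have e2 : ((((m:ℝ) * θ : ℝ)) : ℂ) * Complex.I = (((m:ℤ) : ℤ) : ℂ) * (θ * Complex.I) := by
      push_cast; ring
    rw [show (-↑((m:ℝ) * θ) * Complex.I : ℂ) = ((-(m:ℤ) : ℤ) : ℂ) * (θ * Complex.I) by push_cast; ring,
       e2, Complex.exp_int_mul, Complex.exp_int_mul, ← hwdef]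
    rw [zpow_neg, zpow_natCast]
  have hsum : ∀ r : ℕ, Complex.exp (((2 * r + 1 - m : ℤ) : ℂ) * (θ * Complex.I))
      = (w ^ m)⁻¹ * w * (w ^ 2) ^ r := by
    intro r
    rw [Complex.exp_int_mul, ← hwdef]
    rw [zpow_sub₀ hw, zpow_natCast]
    have : w ^ (2 * (r:ℤ) + 1) = w ^ (2 * r + 1 : ℕ) := by
      rw [← zpow_natCast]; norm_cast
    rw [this]
    rw [pow_succ, pow_mul]
    ring
  rw [hsinm, geom_aux' w hw m, hsin]
  simp only [hsum]
  simp only [Finset.mul_sum, Finset.sum_mul, Finset.sum_div]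
  apply Finset.sum_congr rfl
  intro r _
  ring

private noncomputable def Mex : ℕ → (ℕ → ℕ) → Multiset ℤ
  | 0, _ => {0}
  | n + 1, m =>
      (Finset.range (m 0)).val.bind fun r =>
        (Mex n fun i => m (i + 1)).map fun c => (2 * (r : ℤ) + 1 - (m 0 : ℤ)) + c

private lemma Mex_card (n : ℕ) (m : ℕ → ℕ) :
    Multiset.card (Mex n m) = ∏ i ∈ Finset.range n, m i := by
  induction n generalizing m with
  | zero => simp [Mex]
  | succ n ih =>
      rw [Mex, Multiset.card_bind, Finset.prod_range_succ']
      trans ((Finset.range (m 0)).val.map (fun _ : ℕ => ∏ i ∈ Finset.range n, m (i + 1))).sum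
      · congr 1
        apply Multiset.map_congr rfl
        intro r _
        simp [ih, Function.comp]
      · simp [Multiset.map_const', Multiset.sum_replicate, mul_comm]

private lemma Mex_parity (n : ℕ) (m : ℕ → ℕ) :
    ∀ c ∈ Mex n m, (c : ZMod 2) = ∑ i ∈ Finset.range n, ((m i : ZMod 2) + 1) := by
  induction n generalizing m with
  | zero => intro c hc; simp [Mex] at hc; simp [hc]
  | succ n ih =>
      intro c hc
      simp only [Mex, Multiset.mem_bind, Multiset.mem_map, Finset.mem_val, Finset.mem_range] at hc
      obtain ⟨r, hr, c', hc', rfl⟩ := hc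
      rw [Finset.sum_range_succ']
      have hc'' := ih (fun i => m (i + 1)) c' hc'
      push_cast
      rw [hc'']
      have h2 : (2 : ZMod 2) = 0 := by decide
      linear_combination ((r : ZMod 2) - (m 0 : ZMod 2)) * h2

private lemma Mex_expand (n : ℕ) (m : ℕ → ℕ) (θ : ℝ) (hθ : Real.sin θ ≠ 0) :
    ((∏ i ∈ Finset.range n, (Real.sin (m i * θ) / Real.sin θ) : ℝ) : ℂ)
      = ((Mex n m).map fun c : ℤ => Complex.exp ((c : ℂ) * (θ * Complex.I))).sum := by
  have hθc : ((Real.sin θ : ℝ) : ℂ) ≠ 0 := Complex.ofReal_ne_zero.mpr hθ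
  induction n generalizing m with
  | zero => simp [Mex]
  | succ n ih =>
      rw [Finset.prod_range_succ', Mex]
      rw [Complex.ofReal_mul, ih (fun i => m (i + 1)), Complex.ofReal_div]
      have hfac : ((Real.sin ((m 0 : ℝ) * θ) : ℝ) : ℂ) / ((Real.sin θ : ℝ) : ℂ)
          = ∑ r ∈ Finset.range (m 0),
              Complex.exp (((2 * r + 1 - m 0 : ℤ) : ℂ) * (θ * Complex.I)) := by
        rw [sin_mul_expand' (m 0) θ, mul_comm, mul_div_assoc, div_self hθc, mul_one]
      have hinner : ∀ r : ℕ,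
          (Multiset.map (fun c : ℤ => Complex.exp ((c : ℂ) * (θ * Complex.I)))
              (Multiset.map (fun c : ℤ => (2 * (r:ℤ) + 1 - (m 0 : ℤ)) + c)
                (Mex n fun i => m (i + 1)))).sum
            = Complex.exp (((2 * r + 1 - m 0 : ℤ) : ℂ) * (θ * Complex.I)) *
                ((Mex n fun i => m (i + 1)).map
                  fun c : ℤ => Complex.exp ((c : ℂ) * (θ * Complex.I))).sum := by
        intro r
        rw [Multiset.map_map, ← Multiset.sum_map_mul_left]
        congr 1
        apply Multiset.map_congr rfl
        intro c _
        simp only [Function.comp_apply]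
        rw [← Complex.exp_add]
        congr 1
        push_cast
        ring
      rw [Multiset.map_bind, Multiset.sum_bind]
      calc ((Mex n fun i => m (i + 1)).map
              fun c : ℤ => Complex.exp ((c : ℂ) * (θ * Complex.I))).sum *
            (((Real.sin ((m 0 : ℝ) * θ) : ℝ) : ℂ) / ((Real.sin θ : ℝ) : ℂ))
          = ∑ r ∈ Finset.range (m 0),
              Complex.exp (((2 * r + 1 - m 0 : ℤ) : ℂ) * (θ * Complex.I)) *
                ((Mex n fun i => m (i + 1)).map
                  fun c : ℤ => Complex.exp ((c : ℂ) * (θ * Complex.I))).sum := by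
            rw [hfac, mul_comm, Finset.sum_mul]
        _ = _ := by
            rw [Finset.sum_eq_multiset_sum]
            congr 1
            rw [Multiset.map_congr rfl]
            intro r _
            exact (hinner r).symm

private lemma Mex_expand_cos (n : ℕ) (m : ℕ → ℕ) (θ : ℝ) (hθ : Real.sin θ ≠ 0) :
    (∏ i ∈ Finset.range n, (Real.sin (m i * θ) / Real.sin θ))
      = ((Mex n m).map fun c : ℤ => Real.cos ((c : ℝ) * θ)).sum := by
  have h := congrArg Complex.re (Mex_expand n m θ hθ)
  rw [Complex.ofReal_re] at h
  rw [h]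
  have hre : ∀ M : Multiset ℂ, M.sum.re = (M.map Complex.re).sum := by
    intro M
    induction M using Multiset.induction_on with
    | empty => simp
    | cons a M ih => simp [ih]
  rw [hre, Multiset.map_map]
  apply congrArg
  apply Multiset.map_congr rfl
  intro c _
  simp only [Function.comp_apply]
  rw [show ((c : ℂ) * (θ * Complex.I)) = (((c : ℝ) * θ : ℝ) : ℂ) * Complex.I by push_cast; ring]
  exact Complex.exp_ofReal_mul_I_re _

private lemma sin_sign (b : ℤ) (x : ℝ) :
    Real.sin ((b : ℝ) * x) = (b.sign : ℝ) * Real.sin ((b.natAbs : ℝ) * x) := by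
  rcases lt_trichotomy b 0 with h | rfl | h
  · have hs : b.sign = -1 := Int.sign_eq_neg_one_iff_neg.mpr h
    have hn : ((b.natAbs : ℝ)) = -(b : ℝ) := by
      rw [Nat.cast_natAbs, abs_of_neg h]; push_cast; ring
    rw [hs, hn, neg_mul, Real.sin_neg]
    push_cast
    ring
  · simp
  · have hs : b.sign = 1 := Int.sign_eq_one_iff_pos.mpr h
    have hn : ((b.natAbs : ℝ)) = (b : ℝ) := by
      rw [Nat.cast_natAbs, abs_of_pos h]
    rw [hs, hn]
    simp

private lemma factor_eq (b : ℤ) (x : ℝ) :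
    Real.sin ((b : ℝ) * x) / ((b : ℝ) * Real.sin x)
      = ((b.natAbs : ℝ))⁻¹ * (Real.sin ((b.natAbs : ℝ) * x) / Real.sin x) := by
  rcases eq_or_ne b 0 with rfl | hb
  · simp
  · have hsgn : ((b.sign : ℝ)) ≠ 0 := by
      simp [Int.sign_eq_zero_iff_zero, hb]
    have hbcast : ((b : ℝ)) = (b.sign : ℝ) * (b.natAbs : ℝ) := by
      rw [Nat.cast_natAbs, ← Int.cast_mul, Int.sign_mul_abs]
    rw [sin_sign, hbcast, mul_assoc, mul_div_mul_left _ _ hsgn,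
      div_mul_eq_div_div_swap, div_eq_inv_mul]

private lemma natAbs_zmod2 (x : ℤ) : ((x.natAbs : ZMod 2)) = ((x : ZMod 2)) := by
  have hneg : ∀ a : ZMod 2, -a = a := by decide
  have h1 : ((x.natAbs : ZMod 2)) = (((x.natAbs : ℤ)) : ZMod 2) := (Int.cast_natCast x.natAbs).symm
  rw [h1, ← Int.abs_eq_natAbs]
  rcases abs_choice x with h | h
  · rw [h]
  · rw [h, Int.cast_neg, hneg]

lemma sum_count_le (M : Multiset ℤ) (s : Finset ℤ) :
    ∑ d ∈ s, M.count d ≤ Multiset.card M := by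
  classical
  calc ∑ d ∈ s, M.count d ≤ ∑ d ∈ s ∪ M.toFinset, M.count d :=
        Finset.sum_le_sum_of_subset Finset.subset_union_left
    _ = ∑ d ∈ M.toFinset, M.count d :=
        (Finset.sum_subset Finset.subset_union_right (fun x _ hx =>
          Multiset.count_eq_zero_of_notMem (by simpa using hx))).symm
    _ = Multiset.card M := Multiset.toFinset_sum_count_eq M

lemma Mex_count (n : ℕ) (m : ℕ → ℕ) :
    (Mex (n + 1) m).count 0 ≤ ∏ i ∈ Finset.range n, m (i + 1) := by
  classical
  rw [Mex, Multiset.count_bind]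
  set M := Mex n fun i => m (i + 1) with hM
  have hcnt : ∀ r : ℕ,
      (Multiset.map (fun c : ℤ => (2 * (r : ℤ) + 1 - (m 0 : ℤ)) + c) M).count 0
        = M.count (-(2 * (r : ℤ) + 1 - (m 0 : ℤ))) := by
    intro r
    have hinj : Function.Injective fun c : ℤ => (2 * (r : ℤ) + 1 - (m 0 : ℤ)) + c :=
      fun a b h => by simpa using h
    have := Multiset.count_map_eq_count' _ M hinj (-(2 * (r : ℤ) + 1 - (m 0 : ℤ)))
    simpa using this
  calc (Multiset.map (fun r : ℕ =>
          (Multiset.map (fun c : ℤ => (2 * (r : ℤ) + 1 - (m 0 : ℤ)) + c) M).count 0)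
          (Finset.range (m 0)).val).sum
      = ∑ r ∈ Finset.range (m 0), M.count (-(2 * (r : ℤ) + 1 - (m 0 : ℤ))) := by
        rw [Finset.sum_eq_multiset_sum]
        apply congrArg
        apply Multiset.map_congr rfl
        intro r _
        exact hcnt r
    _ = ∑ d ∈ (Finset.range (m 0)).image (fun r : ℕ => -(2 * (r : ℤ) + 1 - (m 0 : ℤ))),
          M.count d := by
        rw [Finset.sum_image]
        intro a _ b _ h
        simp only at h
        omega
    _ ≤ Multiset.card M := sum_count_le M _
    _ = ∏ i ∈ Finset.range n, m (i + 1) := Mex_card n _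

lemma integral_cos_half (c : ℤ) (hpar : (c : ZMod 2) = 0) :
    ∫ η in (-π)..π, Real.cos (c * η / 2) = if c = 0 then 2 * π else 0 := by
  obtain ⟨d, rfl⟩ : ∃ d : ℤ, c = 2 * d := by
    have := (ZMod.intCast_zmod_eq_zero_iff_dvd c 2).mp hpar
    exact ⟨c / 2, by omega⟩
  have heq : ∀ η : ℝ, ((2 * d : ℤ) : ℝ) * η / 2 = (d : ℝ) * η := by
    intro η; push_cast; ring
  simp only [heq]
  rcases eq_or_ne d 0 with rfl | hd
  · simp [two_mul]
  · have hd' : (d : ℝ) ≠ 0 := Int.cast_ne_zero.mpr hd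
    rw [if_neg (by simpa using hd)]
    rw [intervalIntegral.integral_comp_mul_left Real.cos hd']
    rw [integral_cos]
    have h1 : Real.sin ((d : ℝ) * π) = 0 := Real.sin_int_mul_pi d
    have h2 : Real.sin ((d : ℝ) * (-π)) = 0 := by
      rw [mul_neg, Real.sin_neg, h1, neg_zero]
    rw [h1, h2]
    simp

lemma continuous_msum (M : Multiset ℤ) :
    Continuous fun η : ℝ => (M.map fun c : ℤ => Real.cos (c * η / 2)).sum := by
  induction M using Multiset.induction_on with
  | empty => simpa using continuous_const
  | cons a M ih =>
      simp only [Multiset.map_cons, Multiset.sum_cons]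
      exact Continuous.add (by continuity) ih

lemma integral_msum (M : Multiset ℤ) :
    ∫ η in (-π)..π, (M.map fun c : ℤ => Real.cos (c * η / 2)).sum
      = (M.map fun c : ℤ => ∫ η in (-π)..π, Real.cos (c * η / 2)).sum := by
  induction M using Multiset.induction_on with
  | empty => simp
  | cons a M ih =>
      simp only [Multiset.map_cons, Multiset.sum_cons]
      rw [← ih]
      apply intervalIntegral.integral_add
      · exact (Continuous.intervalIntegrable (by continuity) _ _)
      · exact (continuous_msum M).intervalIntegrable _ _

lemma msum_if (M : Multiset ℤ) :
    (M.map fun c : ℤ => if c = 0 then (2 * π) else (0 : ℝ)).sum = (M.count 0 : ℝ) * (2 * π) := by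
  induction M using Multiset.induction_on with
  | empty => simp
  | cons a M ih =>
      simp only [Multiset.map_cons, Multiset.sum_cons, ih, Multiset.count_cons]
      rcases eq_or_ne a 0 with rfl | h
      · simp; push_cast; ring
      · simp [h, Ne.symm h]


private def mfun (k : ℕ → ℤ) (n : ℕ) : ℕ → ℕ
  | 0 => (k 1 + k (2 * n)).natAbs
  | j + 1 => (k (j + 1) - k (j + 2)).natAbs

end InAux

/-- Lemma (uniform bound for the integrals `I'ₙ`): for `n ≥ 1` and integers
`k₁, …, k_{2n}` with `|k_j − k_{j+1}| ≥ 1` for `j = 1, …, 2n−1`, the integral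
`I'ₙ = ∫_{−π}^{π} [sin((k₁+k_{2n})η/2)/sin(η/2)]
  · ∏_{j=1}^{2n−1} sin((k_j−k_{j+1})η/2)/((k_j−k_{j+1}) sin(η/2)) dη`
satisfies `|I'ₙ| ≤ 2π`. -/
theorem abs_In'_le_two_pi (n : ℕ) (hn : 1 ≤ n) (k : ℕ → ℤ)
    (hk : ∀ j, 1 ≤ j → j ≤ 2 * n - 1 → 1 ≤ |k j - k (j + 1)|) :
    |∫ η in (-π)..π,
        (Real.sin (((k 1 + k (2 * n) : ℤ) : ℝ) * η / 2) / Real.sin (η / 2)) *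
          ∏ j ∈ Finset.Icc 1 (2 * n - 1),
            Real.sin (((k j - k (j + 1) : ℤ) : ℝ) * η / 2) /
              (((k j - k (j + 1) : ℤ) : ℝ) * Real.sin (η / 2))|
      ≤ 2 * π := by
  have hπ : (0:ℝ) < π := Real.pi_pos
  rcases eq_or_ne (k 1 + k (2 * n)) 0 with hS0 | hS0
  · simp only [hS0, Int.cast_zero, zero_mul, zero_div, Real.sin_zero,
      intervalIntegral.integral_zero, abs_zero]
    positivity
  set N := 2 * n - 1 with hN
  have h2n : N + 1 = 2 * n := by omega
  set m : ℕ → ℕ := mfun k n with hm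
  set A : ℕ := ∏ i ∈ Finset.range N, m (i + 1) with hA
  have hm0 : m 0 = (k 1 + k (2 * n)).natAbs := rfl
  have hms : ∀ i : ℕ, m (i + 1) = (k (i + 1) - k (i + 2)).natAbs := fun i => rfl
  have hIcc : ∀ f : ℕ → ℝ, ∏ j ∈ Finset.Icc 1 N, f j = ∏ i ∈ Finset.range N, f (i + 1) := by
    intro f
    rw [← Finset.Ico_add_one_right_eq_Icc, Finset.prod_Ico_eq_prod_range]
    simp [add_comm]
  -- the key pointwise identity
  have hkey : ∀ η : ℝ,
      Real.sin (((k 1 + k (2 * n) : ℤ) : ℝ) * η / 2) / Real.sin (η / 2) *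
          ∏ j ∈ Finset.Icc 1 N,
            Real.sin (((k j - k (j + 1) : ℤ) : ℝ) * η / 2) /
              (((k j - k (j + 1) : ℤ) : ℝ) * Real.sin (η / 2))
        = (((k 1 + k (2 * n)).sign : ℝ) * ((A : ℝ))⁻¹) *
            ∏ i ∈ Finset.range (N + 1),
              (Real.sin ((m i : ℝ) * (η / 2)) / Real.sin (η / 2)) := by
    intro η
    have hj : ∀ j ∈ Finset.Icc 1 N,
        Real.sin (((k j - k (j + 1) : ℤ) : ℝ) * η / 2) /
            (((k j - k (j + 1) : ℤ) : ℝ) * Real.sin (η / 2))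
          = (((k j - k (j + 1)).natAbs : ℝ))⁻¹ *
              (Real.sin (((k j - k (j + 1)).natAbs : ℝ) * (η / 2)) / Real.sin (η / 2)) := by
      intro j _
      rw [mul_div_assoc (((k j - k (j + 1) : ℤ)) : ℝ) η 2]
      exact factor_eq _ (η / 2)
    rw [Finset.prod_congr rfl hj, Finset.prod_mul_distrib,
      hIcc fun j => (((k j - k (j + 1)).natAbs : ℝ))⁻¹,
      hIcc fun j => Real.sin (((k j - k (j + 1)).natAbs : ℝ) * (η / 2)) / Real.sin (η / 2)]
    rw [mul_div_assoc (((k 1 + k (2 * n) : ℤ)) : ℝ) η 2, sin_sign (k 1 + k (2 * n)) (η / 2)]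
    rw [Finset.prod_range_succ'
      (fun i => Real.sin ((m i : ℝ) * (η / 2)) / Real.sin (η / 2)) N]
    have hAinv : ∏ i ∈ Finset.range N, ((((k (i + 1) - k (i + 2)).natAbs : ℝ)))⁻¹
        = ((A : ℝ))⁻¹ := by
      rw [hA, Nat.cast_prod, ← Finset.prod_inv_distrib]
      apply Finset.prod_congr rfl
      intro i _
      rw [hms i]
    have hgs : ∀ i ∈ Finset.range N,
        Real.sin (((k (i + 1) - k (i + 2)).natAbs : ℝ) * (η / 2)) / Real.sin (η / 2)
          = Real.sin ((m (i + 1) : ℝ) * (η / 2)) / Real.sin (η / 2) := by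
      intro i _
      rw [hms i]
    rw [Finset.prod_congr rfl hgs, hAinv, hm0]
    ring
  have hparity : ∀ c ∈ Mex (N + 1) m, (c : ZMod 2) = 0 := by
    intro c hc
    rw [Mex_parity (N + 1) m c hc, Finset.sum_add_distrib, Finset.sum_const, Finset.card_range,
      Finset.sum_range_succ']
    have hz : ∑ i ∈ Finset.range N, ((m (i + 1) : ZMod 2))
        = (((k 1 - k (N + 1) : ℤ)) : ZMod 2) := by
      rw [Finset.sum_congr rfl fun i _ => by rw [hms i, natAbs_zmod2]]
      rw [show ∑ i ∈ Finset.range N, (((k (i + 1) - k (i + 2) : ℤ)) : ZMod 2)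
          = (((∑ i ∈ Finset.range N, (k (i + 1) - k (i + 2))) : ℤ) : ZMod 2) from
          (Int.cast_sum _ _).symm]
      rw [Finset.sum_range_sub' (fun i => k (i + 1)) N]
    rw [hz, hm0, natAbs_zmod2, h2n]
    push_cast [nsmul_eq_mul]
    have h2 : (2 : ZMod 2) = 0 := by decide
    linear_combination (((k 1 : ℤ) : ZMod 2) + ((n : ℕ) : ZMod 2)) * h2
  have h0ae : ∀ᵐ η : ℝ, η ≠ (0:ℝ) := by
    have h00 : MeasureTheory.volume ({(0:ℝ)} : Set ℝ) = 0 := MeasureTheory.measure_singleton 0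
    rw [MeasureTheory.ae_iff]
    simpa using h00
  have hQint : (∫ η in (-π)..π,
      ∏ i ∈ Finset.range (N + 1), (Real.sin ((m i : ℝ) * (η / 2)) / Real.sin (η / 2)))
      = 2 * π * (((Mex (N + 1) m).count 0 : ℕ) : ℝ) := by
    have hcong : (∫ η in (-π)..π,
        ∏ i ∈ Finset.range (N + 1), (Real.sin ((m i : ℝ) * (η / 2)) / Real.sin (η / 2)))
        = ∫ η in (-π)..π, ((Mex (N + 1) m).map fun c : ℤ => Real.cos ((c : ℝ) * η / 2)).sum := by
      apply intervalIntegral.integral_congr_ae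
      filter_upwards [h0ae] with η hη
      intro hmem
      have hmem' : η ∈ Set.Ioc (-π) π := by
        rwa [Set.uIoc_of_le (by linarith : -π ≤ π)] at hmem
      have hs2 : Real.sin (η / 2) ≠ 0 := by
        intro hsin
        have hb1 : -π < η / 2 := by nlinarith [hmem'.1]
        have hb2 : η / 2 < π := by nlinarith [hmem'.2]
        have := (Real.sin_eq_zero_iff_of_lt_of_lt hb1 hb2).mp hsin
        exact hη (by linarith)
      rw [Mex_expand_cos (N + 1) m (η / 2) hs2]
      apply congrArg
      apply Multiset.map_congr rfl
      intro c _
      rw [mul_div_assoc]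
    rw [hcong, integral_msum,
      Multiset.map_congr rfl fun c hc => integral_cos_half c (hparity c hc), msum_if]
    ring
  have h1 : (∫ η in (-π)..π,
        Real.sin (((k 1 + k (2 * n) : ℤ) : ℝ) * η / 2) / Real.sin (η / 2) *
          ∏ j ∈ Finset.Icc 1 N,
            Real.sin (((k j - k (j + 1) : ℤ) : ℝ) * η / 2) /
              (((k j - k (j + 1) : ℤ) : ℝ) * Real.sin (η / 2)))
      = (((k 1 + k (2 * n)).sign : ℝ) * ((A : ℝ))⁻¹) *
          ∫ η in (-π)..π,
            ∏ i ∈ Finset.range (N + 1), (Real.sin ((m i : ℝ) * (η / 2)) / Real.sin (η / 2)) := by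
    rw [← intervalIntegral.integral_const_mul]
    apply intervalIntegral.integral_congr
    intro η _
    exact hkey η
  rw [h1, hQint]
  have hsign : |((k 1 + k (2 * n)).sign : ℝ)| = 1 := by
    rcases lt_trichotomy (k 1 + k (2 * n)) 0 with h | h | h
    · rw [Int.sign_eq_neg_one_iff_neg.mpr h]; norm_num
    · exact absurd h hS0
    · rw [Int.sign_eq_one_iff_pos.mpr h]; norm_num
  have hA1 : 1 ≤ A := by
    rw [hA]
    apply Finset.one_le_prod'
    intro i hi
    rw [hms i]
    have h2 := hk (i + 1) (by omega) (by simp only [Finset.mem_range] at hi; omega)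
    rw [Int.abs_eq_natAbs] at h2
    exact_mod_cast h2
  have hcount : (((Mex (N + 1) m).count 0 : ℕ) : ℝ) ≤ (A : ℝ) := by
    have hc := Mex_count N m
    rw [← hA] at hc
    exact_mod_cast hc
  have hApos : (0:ℝ) < (A : ℝ) := by
    exact_mod_cast Nat.lt_of_lt_of_le Nat.zero_lt_one hA1
  rw [abs_mul, abs_mul, hsign, one_mul,
    abs_of_nonneg (by positivity : (0:ℝ) ≤ ((A : ℝ))⁻¹),
    abs_of_nonneg (by positivity : (0:ℝ) ≤ 2 * π * (((Mex (N + 1) m).count 0 : ℕ) : ℝ))]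
  calc ((A : ℝ))⁻¹ * (2 * π * (((Mex (N + 1) m).count 0 : ℕ) : ℝ))
      ≤ ((A : ℝ))⁻¹ * (2 * π * (A : ℝ)) := by gcongr
    _ = 2 * π := by field_simp
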